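/- Let [X] ∈ M_g^{(n)} be non-hyperelliptic and P ∈ X. Then the holomorphic sectional curvature of A_g^{(n)} with the Siegel metric evaluated at the tangent direction given by the Schiffer variation ξ_P equals −1; indeed, the image of the holomorphic sectional curvature of the Siegel space H_g is the segment [−1, −1/g], the directions with curvature −1 correspond to symmetric matrices of rank 1, and every Schiffer variation, viewed as a symmetric homomorphism H⁰(K_X) → H⁰(K_X)*, has rank 1. -/

import Mathlib

open Real

/-!
STATEMENT 11: for `[X] ∈ M_g^{(n)}` non-hyperelliptic and `P ∈ X`, the holomorphic
sectional curvature of `A_g^{(n)}` with the Siegel metric at the direction of the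
Schiffer variation `ξ_P` equals `-1`; indeed the image of the holomorphic sectional
curvature of `H_g` is `[-1, -1/g]`, the directions with curvature `-1` correspond to
symmetric matrices of rank `1`, and `ξ_P`, viewed as a symmetric homomorphism
`H⁰(K_X) → H⁰(K_X)*` with matrix `2π (f_i(P) f_j(P))_{ij}`, has rank `1`.
-/
theorem schiffer_direction_has_curvature_minus_one
    (g n : ℕ) (hg : 2 ≤ g) (hn : 3 ≤ n)
    (Point : Type) (hyperelliptic : Prop) (hnh : ¬hyperelliptic)
    -- tangent directions to A_g^{(n)} at j([X]): elements of S²(H⁰(K_X)*), viewed as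
    -- symmetric homomorphisms H⁰(K_X) → H⁰(K_X)*, i.e. symmetric matrices in the
    -- orthonormal basis {ω_i}
    (TanA : Type)
    (mat : TanA → Matrix (Fin g) (Fin g) ℂ)
    (hsymm : ∀ v, (mat v).IsSymm)
    -- holomorphic sectional curvature of the Siegel metric
    (Hsec : TanA → ℝ)
    -- the image of the holomorphic sectional curvature of H_g is [-1, -1/g]
    (hrange : Set.range Hsec = Set.Icc (-1 : ℝ) (-1 / (g : ℝ)))
    -- curvature -1 at exactly the rank-one symmetric directions
    (hchar : ∀ v, Hsec v = -1 ↔ (mat v).rank = 1)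
    -- the Schiffer variation ξ_P at P, with matrix 2π (f_i(P) f_j(P))_{ij}
    (P : Point) (f : Fin g → Point → ℂ) (xiP : TanA)
    (hmat : mat xiP = Matrix.of fun i j => 2 * (π : ℂ) * f i P * f j P)
    -- the canonical bundle has no base points: some ω_i is nonzero at P
    (hbpf : ∃ i, f i P ≠ 0) :
    (mat xiP).rank = 1 ∧ Hsec xiP = -1 := by
  obtain ⟨i0, hi0⟩ := hbpf
  have hfac : mat xiP = (Matrix.of fun i (_ : Fin 1) => 2 * (π : ℂ) * f i P) *
      (Matrix.of fun (_ : Fin 1) j => f j P) := by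
    rw [hmat]
    ext i j
    simp [Matrix.mul_apply]
  have hle : (mat xiP).rank ≤ 1 := by
    rw [hfac]
    calc _ ≤ (Matrix.of fun (_ : Fin 1) j => f j P : Matrix (Fin 1) (Fin g) ℂ).rank :=
          Matrix.rank_mul_le_right _ _
      _ ≤ Fintype.card (Fin 1) := Matrix.rank_le_card_height _
      _ = 1 := by simp
  have hge : 1 ≤ (mat xiP).rank := by
    rw [Nat.one_le_iff_ne_zero, Matrix.rank]
    intro h
    have hr : LinearMap.range (mat xiP).mulVecLin = ⊥ :=
      Submodule.finrank_eq_zero.mp h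
    have : (mat xiP).mulVecLin (Pi.single i0 1) = 0 := by
      have hm := LinearMap.mem_range_self (mat xiP).mulVecLin (Pi.single i0 1)
      rw [hr, Submodule.mem_bot] at hm
      exact hm
    have h2 := congrFun this i0
    simp [Matrix.mulVecLin, hmat, Matrix.mulVec_single] at h2
    exact hi0 h2
  have hrank : (mat xiP).rank = 1 := le_antisymm hle hge
  exact ⟨hrank, (hchar xiP).mpr hrank⟩
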